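/- arXiv:2003.01160 — 3 statements merged into one kernel-verified Lean document; each statement's English description precedes it below -/
import Mathlib

section
/- Let X be a finite set and Q an irreducible, reversible Markov kernel on X with stationary measure π, and let θ be the logarithmic mean. Assume the global gradient estimate with constant κ holds: for all probability densities ρ ∈ D(X), all f : X → ℝ and all t ≥ 0, (1/2)·Σ_{u,v} (P_t f(v) − P_t f(u))² θ(ρ(u),ρ(v)) Q(u,v) π(u) ≤ e^{−2κt} · (1/2)·Σ_{u,v} (f(v) − f(u))² θ(P_t ρ(u), P_t ρ(v)) Q(u,v) π(u). Then for every x ∈ X, every f : X → ℝ, every t ≥ 0 and every ε > 0, one has Γ(P_t f)(x)·π(x) ≤ (e^{−2κt}/(2θ(1,ε))) · [ P_t Γ(f)(x)·π(x) + ε · Σ_{y ∈ N(x)} P_t Γ(f)(y)·π(y) ], where N(x) = {y : Q(x,y) > 0}. -/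
/-- The logarithmic mean: `θ(a,b) = (a-b)/(log a - log b)` for distinct positive `a,b`,
`θ(a,a) = a`, and `θ(a,b) = 0` when `a = 0` or `b = 0`. -/
noncomputable def logMean (a b : ℝ) : ℝ :=
  if a = 0 ∨ b = 0 then 0
  else if a = b then a
  else (a - b) / (Real.log a - Real.log b)

/-- The discrete Laplacian `Δf(x) = Σ_y (f(y)-f(x)) Q(x,y)`. -/
noncomputable def lap {X : Type*} [Fintype X] (Q : X → X → ℝ) (f : X → ℝ) (x : X) : ℝ :=
  ∑ y, (f y - f x) * Q x y

/-- The heat semigroup `P_t = e^{tΔ}`, realized via the matrix exponential of `t•(Q - I)`.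
(When `Σ_y Q(x,y) = 1`, the matrix `Q - I` acts on functions exactly as `Δ` does.) -/
noncomputable def heat {X : Type*} [Fintype X] [DecidableEq X] (Q : X → X → ℝ) (t : ℝ)
    (f : X → ℝ) : X → ℝ :=
  (NormedSpace.exp (t • (Matrix.of fun x y => Q x y - if x = y then (1 : ℝ) else 0))).mulVec f

/-- The carré du champ operator `Γ(f)(x) = Σ_y (f(y)-f(x))² Q(x,y)`. -/
noncomputable def gam {X : Type*} [Fintype X] (Q : X → X → ℝ) (f : X → ℝ) (x : X) : ℝ :=
  ∑ y, (f y - f x) ^ 2 * Q x y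




lemma exp_entry_hasSum {X : Type*} [Fintype X] [DecidableEq X] (M : Matrix X X ℝ) (u v : X) :
    HasSum (fun n : ℕ => ((n.factorial : ℝ)⁻¹ • M ^ n) u v) (NormedSpace.exp M u v) := by
  letI : SeminormedRing (Matrix X X ℝ) := Matrix.linftyOpSemiNormedRing
  letI : NormedRing (Matrix X X ℝ) := Matrix.linftyOpNormedRing
  letI : NormedAlgebra ℝ (Matrix X X ℝ) := Matrix.linftyOpNormedAlgebra
  exact (NormedSpace.exp_series_hasSum_exp' (𝕂 := ℝ) M).mapL
    ((ContinuousLinearMap.proj (R := ℝ) (φ := fun _ : X => ℝ) v).comp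
      (ContinuousLinearMap.proj (R := ℝ) (φ := fun _ : X => X → ℝ) u))

lemma pow_entry_nonneg {X : Type*} [Fintype X] {M : Matrix X X ℝ} (h : ∀ i j, 0 ≤ M i j)
    [DecidableEq X] (n : ℕ) : ∀ i j, 0 ≤ (M ^ n) i j := by
  induction n with
  | zero => intro i j; rw [pow_zero, Matrix.one_apply]; split <;> norm_num
  | succ n ih =>
    intro i j
    rw [pow_succ, Matrix.mul_apply]
    exact Finset.sum_nonneg fun w _ => mul_nonneg (ih i w) (h w j)

lemma exp_entry_nonneg {X : Type*} [Fintype X] [DecidableEq X] {M : Matrix X X ℝ}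
    (h : ∀ i j, 0 ≤ M i j) (i j : X) : 0 ≤ NormedSpace.exp M i j := by
  refine hasSum_le (fun n => ?_) hasSum_zero (exp_entry_hasSum M i j)
  show (0 : ℝ) ≤ ((n.factorial : ℝ)⁻¹ • M ^ n) i j
  rw [Matrix.smul_apply, smul_eq_mul]
  exact mul_nonneg (by positivity) (pow_entry_nonneg h n i j)

lemma exp_entry_symm {X : Type*} [Fintype X] [DecidableEq X] (M : Matrix X X ℝ) (π : X → ℝ)
    (hsym : ∀ i j, π i * M i j = π j * M j i) (i j : X) :
    π i * NormedSpace.exp M i j = π j * NormedSpace.exp M j i := by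
  have hpow : ∀ n : ℕ, ∀ i j, π i * (M ^ n) i j = π j * (M ^ n) j i := by
    intro n
    induction n with
    | zero =>
      intro i j
      rw [pow_zero, Matrix.one_apply, Matrix.one_apply]
      rcases eq_or_ne i j with rfl | hij
      · rfl
      · rw [if_neg hij, if_neg (Ne.symm hij)]; simp
    | succ n ih =>
      intro i j
      rw [pow_succ]
      calc π i * (M ^ n * M) i j
          = ∑ w, π i * ((M ^ n) i w * M w j) := by rw [Matrix.mul_apply, Finset.mul_sum]
        _ = ∑ w, π j * (M j w * (M ^ n) w i) := by
            refine Finset.sum_congr rfl fun w _ => ?_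
            calc π i * ((M ^ n) i w * M w j) = (π i * (M ^ n) i w) * M w j := by ring
              _ = (π w * (M ^ n) w i) * M w j := by rw [ih i w]
              _ = (M ^ n) w i * (π w * M w j) := by ring
              _ = (M ^ n) w i * (π j * M j w) := by rw [hsym w j]
              _ = π j * (M j w * (M ^ n) w i) := by ring
        _ = π j * (M * M ^ n) j i := by rw [Matrix.mul_apply, Finset.mul_sum]
        _ = π j * (M ^ n * M) j i := by rw [pow_mul_comm']
  have h1 := (exp_entry_hasSum M i j).mul_left (π i)
  have h2 := (exp_entry_hasSum M j i).mul_left (π j)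
  refine h1.unique ?_
  convert h2 using 1
  funext n
  show π i * ((n.factorial : ℝ)⁻¹ • M ^ n) i j = π j * ((n.factorial : ℝ)⁻¹ • M ^ n) j i
  rw [Matrix.smul_apply, Matrix.smul_apply, smul_eq_mul, smul_eq_mul]
  calc π i * ((n.factorial : ℝ)⁻¹ * (M ^ n) i j)
      = (n.factorial : ℝ)⁻¹ * (π i * (M ^ n) i j) := by ring
    _ = (n.factorial : ℝ)⁻¹ * (π j * (M ^ n) j i) := by rw [hpow n i j]
    _ = π j * ((n.factorial : ℝ)⁻¹ * (M ^ n) j i) := by ring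

lemma exp_smul_one_entry {X : Type*} [Fintype X] [DecidableEq X] (c : ℝ) (i j : X) :
    NormedSpace.exp (c • (1 : Matrix X X ℝ)) i j = if i = j then Real.exp c else 0 := by
  have h := exp_entry_hasSum (c • (1 : Matrix X X ℝ)) i j
  have heq : (fun n : ℕ => ((n.factorial : ℝ)⁻¹ • (c • (1 : Matrix X X ℝ)) ^ n) i j) =
      fun n : ℕ => if i = j then (n.factorial : ℝ)⁻¹ * c ^ n else 0 := by
    funext n
    rw [smul_pow, one_pow, Matrix.smul_apply, Matrix.smul_apply, Matrix.one_apply,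
      smul_eq_mul, smul_eq_mul]
    split <;> ring
  rw [heq] at h
  rcases eq_or_ne i j with rfl | hij
  · simp only [if_pos rfl] at h ⊢
    have h2 : HasSum (fun n : ℕ => (n.factorial : ℝ)⁻¹ * c ^ n) (Real.exp c) := by
      have := NormedSpace.exp_series_hasSum_exp' (𝕂 := ℝ) c
      simpa [Real.exp_eq_exp_ℝ] using this
    exact h.unique h2
  · simp only [if_neg hij] at h ⊢
    exact h.unique hasSum_zero




lemma logMean_pos {a b : ℝ} (ha : 0 < a) (hb : 0 < b) : 0 < logMean a b := by
  unfold logMean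
  rw [if_neg (by push_neg; exact ⟨ha.ne', hb.ne'⟩)]
  rcases lt_trichotomy a b with h | h | h
  · rw [if_neg h.ne]
    exact div_pos_of_neg_of_neg (by linarith) (by simpa using Real.log_lt_log ha h)
  · rw [if_pos h]; exact ha
  · rw [if_neg h.ne']
    exact div_pos (by linarith) (by simpa using Real.log_lt_log hb h)

lemma logMean_nonneg {a b : ℝ} (ha : 0 ≤ a) (hb : 0 ≤ b) : 0 ≤ logMean a b := by
  rcases ha.eq_or_lt with h | h
  · simp [logMean, ← h]
  rcases hb.eq_or_lt with h' | h'
  · simp [logMean, ← h']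
  exact (logMean_pos h h').le

lemma logMean_symm (a b : ℝ) : logMean a b = logMean b a := by
  unfold logMean
  rcases eq_or_ne a b with rfl | hab
  · simp
  · rw [if_neg hab, if_neg (Ne.symm hab)]
    by_cases h : a = 0 ∨ b = 0
    · rw [if_pos h, if_pos (by tauto)]
    · rw [if_neg h, if_neg (by tauto), ← neg_sub b a, ← neg_sub (Real.log b), neg_div_neg_eq]

lemma logMean_div {a b c : ℝ} (ha : 0 < a) (hb : 0 < b) (hc : 0 < c) :
    logMean (a / c) (b / c) = logMean a b / c := by
  rcases eq_or_ne a b with rfl | hab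
  · have h1 : logMean (a / c) (a / c) = a / c := by
      rw [logMean, if_neg (by push_neg; exact ⟨by positivity, by positivity⟩), if_pos rfl]
    have h2 : logMean a a = a := by
      rw [logMean, if_neg (by push_neg; exact ⟨ha.ne', ha.ne'⟩), if_pos rfl]
    rw [h1, h2]
  · have hab' : a / c ≠ b / c := fun h => hab (by field_simp at h; exact h)
    have h1 : logMean (a / c) (b / c) =
        (a / c - b / c) / (Real.log (a / c) - Real.log (b / c)) := by
      rw [logMean, if_neg (by push_neg; exact ⟨by positivity, by positivity⟩), if_neg hab']
    have h2 : logMean a b = (a - b) / (Real.log a - Real.log b) := by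
      rw [logMean, if_neg (by push_neg; exact ⟨ha.ne', hb.ne'⟩), if_neg hab]
    rw [h1, h2, Real.log_div ha.ne' hc.ne', Real.log_div hb.ne' hc.ne',
      div_sub_div_same, sub_sub_sub_cancel_right, div_right_comm]

lemma key_log_ineq {x : ℝ} (hx : 1 < x) : 2 * (x - 1) ≤ (x + 1) * Real.log x := by
  set g : ℝ → ℝ := fun y => (y + 1) * Real.log y - 2 * (y - 1) with hg
  have hderiv : ∀ y ∈ Set.Ioi (1 : ℝ), HasDerivAt g (Real.log y + (y + 1) / y - 2) y := by
    intro y hy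
    have hy0 : 0 < y := lt_trans one_pos hy
    have h1 : HasDerivAt (fun y : ℝ => (y + 1) * Real.log y)
        (1 * Real.log y + (y + 1) * y⁻¹) y :=
      (((hasDerivAt_id y).add_const 1)).mul (Real.hasDerivAt_log hy0.ne')
    have h2 : HasDerivAt (fun y : ℝ => 2 * (y - 1)) 2 y := by
      simpa using ((hasDerivAt_id y).sub_const 1).const_mul 2
    have := h1.sub h2
    exact this.congr_deriv (by ring)
  have hmono : MonotoneOn g (Set.Ici (1 : ℝ)) := by
    apply monotoneOn_of_deriv_nonneg (convex_Ici 1)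
    · apply ContinuousOn.sub
      · exact (continuousOn_id.add continuousOn_const).mul
          (Real.continuousOn_log.mono (by intro y hy; simp at hy ⊢; linarith))
      · fun_prop
    · intro y hy
      rw [interior_Ici] at hy
      exact (hderiv y hy).differentiableAt.differentiableWithinAt
    · intro y hy
      rw [interior_Ici] at hy
      rw [(hderiv y hy).deriv]
      have hy1 : (1 : ℝ) < y := hy
      have hy0 : 0 < y := lt_trans one_pos hy1
      have hlog : 1 - 1 / y ≤ Real.log y := by
        have := Real.log_le_sub_one_of_pos (show 0 < 1 / y by positivity)
        rw [Real.log_div one_ne_zero hy0.ne', Real.log_one] at this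
        linarith
      have : (y + 1) / y = 1 + 1 / y := by field_simp
      rw [this]; linarith
  have h1 : g 1 ≤ g x := hmono (by simp) (by simp [hx.le]) hx.le
  have hg1 : g 1 = 0 := by simp [hg]
  rw [hg1] at h1
  simp only [hg] at h1
  linarith

lemma logMean_le_am {a b : ℝ} (ha : 0 ≤ a) (hb : 0 ≤ b) : logMean a b ≤ (a + b) / 2 := by
  have main : ∀ p q : ℝ, 0 < q → q < p → logMean p q ≤ (p + q) / 2 := by
    intro p q hq hqp
    have hp : 0 < p := lt_trans hq hqp
    unfold logMean
    rw [if_neg (by push_neg; exact ⟨hp.ne', hq.ne'⟩), if_neg hqp.ne']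
    have hx : 1 < p / q := (one_lt_div hq).mpr hqp
    have hkey := key_log_ineq hx
    rw [Real.log_div hp.ne' hq.ne'] at hkey
    have hlpos : 0 < Real.log p - Real.log q := by
      simpa [sub_pos] using Real.log_lt_log hq hqp
    rw [div_le_div_iff₀ hlpos two_pos]
    have h1 : (p / q + 1) = (p + q) / q := by field_simp
    have h2 : (p / q - 1) = (p - q) / q := by field_simp
    rw [h1, h2] at hkey
    have := mul_le_mul_of_nonneg_right hkey hq.le
    calc (p - q) * 2 = 2 * ((p - q) / q) * q := by field_simp
      _ ≤ (p + q) / q * (Real.log p - Real.log q) * q := this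
      _ = (p + q) * (Real.log p - Real.log q) := by field_simp
  rcases ha.eq_or_lt with h | h
  · simp [logMean, ← h]; positivity
  rcases hb.eq_or_lt with h' | h'
  · simp [logMean, ← h']; positivity
  rcases lt_trichotomy a b with hab | rfl | hab
  · rw [logMean_symm]; rw [show a + b = b + a by ring]; exact main b a h hab
  · have : logMean a a = a := by
      rw [logMean, if_neg (by push_neg; exact ⟨h.ne', h.ne'⟩), if_pos rfl]
    rw [this]; linarith
  · exact main a b h' hab



section Heat

variable {X : Type*} [Fintype X] [DecidableEq X] (Q : X → X → ℝ) (π : X → ℝ) (t : ℝ)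

lemma heat_apply (f : X → ℝ) (x : X) :
    heat Q t f x = ∑ y, NormedSpace.exp
      (t • (Matrix.of fun x y => Q x y - if x = y then (1 : ℝ) else 0)) x y * f y := by
  simp [heat, Matrix.mulVec, dotProduct]

lemma heat_matrix_entry_nonneg (hQ0 : ∀ x y, 0 ≤ Q x y) (ht : 0 ≤ t) (i j : X) :
    0 ≤ NormedSpace.exp
      (t • (Matrix.of fun x y => Q x y - if x = y then (1 : ℝ) else 0)) i j := by
  have hsplit : t • (Matrix.of fun x y => Q x y - if x = y then (1 : ℝ) else 0)
      = t • Matrix.of Q + (-t) • (1 : Matrix X X ℝ) := by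
    ext a b
    by_cases h : a = b <;>
      simp [Matrix.add_apply, Matrix.smul_apply, Matrix.one_apply, Matrix.of_apply, h] <;> ring
  have hcomm : Commute (t • Matrix.of Q) ((-t) • (1 : Matrix X X ℝ)) :=
    (Commute.one_right (t • Matrix.of Q)).smul_right (-t)
  rw [hsplit, Matrix.exp_add_of_commute _ _ hcomm, Matrix.mul_apply]
  refine Finset.sum_nonneg fun w _ => mul_nonneg ?_ ?_
  · refine exp_entry_nonneg (fun a b => ?_) i w
    simp only [Matrix.smul_apply, Matrix.of_apply, smul_eq_mul]
    exact mul_nonneg ht (hQ0 a b)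
  · rw [exp_smul_one_entry]
    split
    · exact (Real.exp_pos _).le
    · exact le_refl 0

lemma heat_matrix_entry_symm (hrev : ∀ x y, Q x y * π x = Q y x * π y) (i j : X) :
    π i * NormedSpace.exp
        (t • (Matrix.of fun x y => Q x y - if x = y then (1 : ℝ) else 0)) i j
    = π j * NormedSpace.exp
        (t • (Matrix.of fun x y => Q x y - if x = y then (1 : ℝ) else 0)) j i := by
  refine exp_entry_symm _ π (fun a b => ?_) i j
  simp only [Matrix.smul_apply, Matrix.of_apply, smul_eq_mul]
  rcases eq_or_ne a b with rfl | hab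
  · ring
  · rw [if_neg hab, if_neg (Ne.symm hab)]
    calc π a * (t * (Q a b - 0)) = t * (Q a b * π a) := by ring
      _ = t * (Q b a * π b) := by rw [hrev a b]
      _ = π b * (t * (Q b a - 0)) := by ring

lemma heat_nonneg (hQ0 : ∀ x y, 0 ≤ Q x y) (ht : 0 ≤ t) (f : X → ℝ) (hf : ∀ y, 0 ≤ f y)
    (x : X) : 0 ≤ heat Q t f x := by
  rw [heat_apply]
  exact Finset.sum_nonneg fun y _ =>
    mul_nonneg (heat_matrix_entry_nonneg Q t hQ0 ht x y) (hf y)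

lemma heat_selfAdjoint (hrev : ∀ x y, Q x y * π x = Q y x * π y) (ρ g : X → ℝ) :
    ∑ u, heat Q t ρ u * g u * π u = ∑ u, ρ u * heat Q t g u * π u := by
  set E := NormedSpace.exp
    (t • (Matrix.of fun x y => Q x y - if x = y then (1 : ℝ) else 0)) with hE
  have hsym := heat_matrix_entry_symm Q π t hrev
  calc ∑ u, heat Q t ρ u * g u * π u
      = ∑ u, ∑ v, ρ v * g u * (π u * E u v) := by
        refine Finset.sum_congr rfl fun u _ => ?_
        rw [heat_apply, Finset.sum_mul, Finset.sum_mul]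
        exact Finset.sum_congr rfl fun v _ => by ring
    _ = ∑ v, ∑ u, ρ v * g u * (π v * E v u) := by
        rw [Finset.sum_comm]
        exact Finset.sum_congr rfl fun u _ => Finset.sum_congr rfl fun v _ => by
          rw [hsym u v]
    _ = ∑ v, ρ v * heat Q t g v * π v := by
        refine Finset.sum_congr rfl fun v _ => ?_
        rw [heat_apply Q t g v, ← hE, Finset.mul_sum, Finset.sum_mul]
        exact Finset.sum_congr rfl fun u _ => by ring

end Heat



/-- **Local gradient estimate** derived from the global gradient estimate with the
logarithmic mean: for every `x`, `f`, `t ≥ 0` and `ε > 0`,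
`Γ(P_t f)(x)·π(x) ≤ (e^{-2κt}/(2θ(1,ε)))·[P_tΓ(f)(x)·π(x) + ε·Σ_{y∈N(x)} P_tΓ(f)(y)·π(y)]`. -/
theorem local_gradient_estimate
    {X : Type*} [Fintype X] [DecidableEq X] (Q : X → X → ℝ) (π : X → ℝ) (κ : ℝ)
    (hQ0 : ∀ x y, 0 ≤ Q x y) (hQ1 : ∀ x, ∑ y, Q x y = 1)
    (hπpos : ∀ x, 0 < π x) (hπ1 : ∑ x, π x = 1)
    (hrev : ∀ x y, Q x y * π x = Q y x * π y)
    (hirr : ∀ x y, ∃ n : ℕ, 0 < ((Matrix.of Q) ^ n) x y)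
    (hGE : ∀ ρ : X → ℝ, (∀ z, 0 ≤ ρ z) → ∑ z, ρ z * π z = 1 → ∀ f : X → ℝ, ∀ t : ℝ, 0 ≤ t →
      (1 / 2) * ∑ u, ∑ v,
          (heat Q t f v - heat Q t f u) ^ 2 * logMean (ρ u) (ρ v) * Q u v * π u ≤
        Real.exp (-2 * κ * t) * ((1 / 2) * ∑ u, ∑ v,
          (f v - f u) ^ 2 * logMean (heat Q t ρ u) (heat Q t ρ v) * Q u v * π u)) :
    ∀ x : X, ∀ f : X → ℝ, ∀ t : ℝ, 0 ≤ t → ∀ ε : ℝ, 0 < ε →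
      gam Q (heat Q t f) x * π x ≤
        Real.exp (-2 * κ * t) / (2 * logMean 1 ε) *
          (heat Q t (gam Q f) x * π x +
            ε * ∑ y, if 0 < Q x y then heat Q t (gam Q f) y * π y else 0) := by
  intro x f t ht ε hε
  classical
  set S : ℝ := π x + ε * ∑ y, (if 0 < Q x y ∧ y ≠ x then π y else 0) with hS
  have hSpos : 0 < S := by
    have h1 : 0 ≤ ∑ y, (if 0 < Q x y ∧ y ≠ x then π y else 0) := by
      refine Finset.sum_nonneg fun y _ => ?_
      split_ifs
      · exact (hπpos y).le
      · exact le_rfl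
    have h2 := hπpos x
    rw [hS]; nlinarith
  set ρ : X → ℝ := fun z => (if z = x then (1 : ℝ) else if 0 < Q x z then ε else 0) / S
    with hρ
  have hρ0 : ∀ z, 0 ≤ ρ z := by
    intro z
    rw [hρ]
    apply div_nonneg _ hSpos.le
    split_ifs
    · norm_num
    · exact hε.le
    · exact le_rfl
  have hgen : ∀ g : X → ℝ,
      ∑ z, ρ z * g z * π z =
        (g x * π x + ε * ∑ y, (if 0 < Q x y ∧ y ≠ x then g y * π y else 0)) / S := by
    intro g
    have hnum : ∀ z : X, ρ z * g z * π z =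
        ((if z = x then g z * π z else 0)
          + ε * (if 0 < Q x z ∧ z ≠ x then g z * π z else 0)) / S := by
      intro z
      rw [hρ]
      dsimp only
      by_cases h1 : z = x
      · subst h1
        rw [if_pos rfl, if_pos rfl, if_neg (fun h => h.2 rfl)]
        ring
      · rw [if_neg h1, if_neg h1]
        by_cases h2 : 0 < Q x z
        · rw [if_pos h2, if_pos ⟨h2, h1⟩]; ring
        · rw [if_neg h2, if_neg (fun h => h2 h.1)]; ring
    calc ∑ z, ρ z * g z * π z
        = ∑ z, ((if z = x then g z * π z else 0)
            + ε * (if 0 < Q x z ∧ z ≠ x then g z * π z else 0)) / S :=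
          Finset.sum_congr rfl fun z _ => hnum z
      _ = (∑ z, ((if z = x then g z * π z else 0)
            + ε * (if 0 < Q x z ∧ z ≠ x then g z * π z else 0))) / S := by
          rw [Finset.sum_div]
      _ = (g x * π x + ε * ∑ y, (if 0 < Q x y ∧ y ≠ x then g y * π y else 0)) / S := by
          rw [Finset.sum_add_distrib, Finset.sum_ite_eq' Finset.univ x (fun z => g z * π z),
            if_pos (Finset.mem_univ x), ← Finset.mul_sum]
  have hρ1 : ∑ z, ρ z * π z = 1 := by
    calc ∑ z, ρ z * π z = ∑ z, ρ z * (fun _ : X => (1 : ℝ)) z * π z := by simp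
      _ = ((fun _ : X => (1 : ℝ)) x * π x
          + ε * ∑ y, (if 0 < Q x y ∧ y ≠ x then (fun _ : X => (1 : ℝ)) y * π y else 0)) / S :=
          hgen _
      _ = 1 := by simp only [one_mul]; rw [← hS, div_self hSpos.ne']
  have key := hGE ρ hρ0 hρ1 f t ht
  have hθ : 0 < logMean 1 ε := logMean_pos one_pos hε
  -- lower bound for the left-hand side of key
  set T : X → X → ℝ :=
    fun u v => (heat Q t f v - heat Q t f u) ^ 2 * logMean (ρ u) (ρ v) * Q u v * π u with hT
  have hT0 : ∀ u v, 0 ≤ T u v := fun u v =>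
    mul_nonneg (mul_nonneg (mul_nonneg (sq_nonneg _)
      (logMean_nonneg (hρ0 u) (hρ0 v))) (hQ0 u v)) (hπpos u).le
  have hTsymm : ∀ u v, T u v = T v u := by
    intro u v
    rw [hT]
    dsimp only
    rw [logMean_symm (ρ u) (ρ v)]
    linear_combination ((heat Q t f u - heat Q t f v) ^ 2 * logMean (ρ v) (ρ u)) * hrev u v
  have hrow : ∀ v, T x v =
      (heat Q t f v - heat Q t f x) ^ 2 * Q x v * π x * (logMean 1 ε / S) := by
    intro v
    rw [hT]
    dsimp only
    by_cases hv : v = x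
    · subst hv; simp
    · by_cases hq : 0 < Q x v
      · have h1 : ρ x = 1 / S := by rw [hρ]; simp
        have h2 : ρ v = ε / S := by rw [hρ]; dsimp only; rw [if_neg hv, if_pos hq]
        rw [h1, h2, logMean_div one_pos hε hSpos]
        ring
      · have h0 : Q x v = 0 := le_antisymm (not_lt.mp hq) (hQ0 x v)
        rw [h0]
        ring
  have hrowsum : ∑ v, T x v = gam Q (heat Q t f) x * π x * (logMean 1 ε / S) := by
    rw [gam, Finset.sum_mul, Finset.sum_mul]
    refine Finset.sum_congr rfl fun v _ => ?_
    rw [hrow v]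
  have hLHS : gam Q (heat Q t f) x * π x * (logMean 1 ε / S) ≤ (1 / 2) * ∑ u, ∑ v, T u v := by
    have h1 : ∑ u, ∑ v, T u v = (∑ v, T x v) + ∑ u ∈ Finset.univ.erase x, ∑ v, T u v := by
      rw [Finset.add_sum_erase Finset.univ (fun u => ∑ v, T u v) (Finset.mem_univ x)]
    have h3 : ∑ u ∈ Finset.univ.erase x, T u x ≤ ∑ u ∈ Finset.univ.erase x, ∑ v, T u v :=
      Finset.sum_le_sum fun u _ =>
        Finset.single_le_sum (fun v _ => hT0 u v) (Finset.mem_univ x)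
    have h4 : ∑ u ∈ Finset.univ.erase x, T u x = ∑ v ∈ Finset.univ.erase x, T x v :=
      Finset.sum_congr rfl fun u _ => hTsymm u x
    have h5 : ∑ v, T x v = T x x + ∑ v ∈ Finset.univ.erase x, T x v :=
      (Finset.add_sum_erase _ _ (Finset.mem_univ x)).symm
    have h6 : T x x = 0 := by rw [hT]; dsimp only; simp
    rw [← hrowsum]
    linarith
  have key' : (1 / 2) * (∑ u, ∑ v, T u v) ≤
      Real.exp (-2 * κ * t) * ((1 / 2) * ∑ u, ∑ v,
        (f v - f u) ^ 2 * logMean (heat Q t ρ u) (heat Q t ρ v) * Q u v * π u) := key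
  -- upper bound for the right-hand side of key
  have hheatρ : ∀ u, 0 ≤ heat Q t ρ u := heat_nonneg Q t hQ0 ht ρ hρ0
  have hUB1 : ∑ u, ∑ v, (f v - f u) ^ 2 * logMean (heat Q t ρ u) (heat Q t ρ v) * Q u v * π u
      ≤ ∑ u, ∑ v, (f v - f u) ^ 2 * ((heat Q t ρ u + heat Q t ρ v) / 2) * Q u v * π u :=
    Finset.sum_le_sum fun u _ => Finset.sum_le_sum fun v _ =>
      mul_le_mul_of_nonneg_right (mul_le_mul_of_nonneg_right
        (mul_le_mul_of_nonneg_left (logMean_le_am (hheatρ u) (hheatρ v)) (sq_nonneg _))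
        (hQ0 u v)) (hπpos u).le
  have e1 : ∑ u, ∑ v, (f v - f u) ^ 2 * heat Q t ρ u * Q u v * π u
      = ∑ u, heat Q t ρ u * gam Q f u * π u := by
    refine Finset.sum_congr rfl fun u _ => ?_
    rw [gam, Finset.mul_sum, Finset.sum_mul]
    exact Finset.sum_congr rfl fun v _ => by ring
  have e2 : ∑ u, ∑ v, (f v - f u) ^ 2 * heat Q t ρ v * Q u v * π u
      = ∑ v, heat Q t ρ v * gam Q f v * π v := by
    rw [Finset.sum_comm]
    refine Finset.sum_congr rfl fun v _ => ?_
    rw [gam, Finset.mul_sum, Finset.sum_mul]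
    refine Finset.sum_congr rfl fun u _ => ?_
    linear_combination ((f v - f u) ^ 2 * heat Q t ρ v) * hrev u v
  have hUB2 : ∑ u, ∑ v, (f v - f u) ^ 2 * ((heat Q t ρ u + heat Q t ρ v) / 2) * Q u v * π u
      = ∑ u, heat Q t ρ u * gam Q f u * π u := by
    calc ∑ u, ∑ v, (f v - f u) ^ 2 * ((heat Q t ρ u + heat Q t ρ v) / 2) * Q u v * π u
        = (1 / 2) * (∑ u, ∑ v, (f v - f u) ^ 2 * heat Q t ρ u * Q u v * π u)
          + (1 / 2) * (∑ u, ∑ v, (f v - f u) ^ 2 * heat Q t ρ v * Q u v * π u) := by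
          rw [Finset.mul_sum, Finset.mul_sum, ← Finset.sum_add_distrib]
          refine Finset.sum_congr rfl fun u _ => ?_
          rw [Finset.mul_sum, Finset.mul_sum, ← Finset.sum_add_distrib]
          exact Finset.sum_congr rfl fun v _ => by ring
      _ = ∑ u, heat Q t ρ u * gam Q f u * π u := by rw [e1, e2]; ring
  have hSA : ∑ u, heat Q t ρ u * gam Q f u * π u
      = ∑ u, ρ u * heat Q t (gam Q f) u * π u := heat_selfAdjoint Q π t hrev ρ (gam Q f)
  have hgam0 : ∀ u, 0 ≤ gam Q f u := fun u =>
    Finset.sum_nonneg fun y _ => mul_nonneg (sq_nonneg _) (hQ0 u y)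
  have hhg0 : ∀ y, 0 ≤ heat Q t (gam Q f) y := heat_nonneg Q t hQ0 ht (gam Q f) hgam0
  set B : ℝ := heat Q t (gam Q f) x * π x
      + ε * ∑ y, (if 0 < Q x y then heat Q t (gam Q f) y * π y else 0) with hB
  have hEval : ∑ u, ρ u * heat Q t (gam Q f) u * π u ≤ B / S := by
    rw [hgen (heat Q t (gam Q f))]
    rw [div_le_div_iff_of_pos_right hSpos, hB]
    refine add_le_add_right (mul_le_mul_of_nonneg_left (Finset.sum_le_sum fun y _ => ?_) hε.le) _
    by_cases h1 : 0 < Q x y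
    · by_cases h2 : y = x
      · rw [if_neg (by tauto), if_pos h1]
        exact mul_nonneg (hhg0 y) (hπpos y).le
      · rw [if_pos ⟨h1, h2⟩, if_pos h1]
    · rw [if_neg (by tauto), if_neg h1]
  have hexp0 : (0 : ℝ) ≤ Real.exp (-2 * κ * t) := (Real.exp_pos _).le
  have h8 : ∑ u, ∑ v, (f v - f u) ^ 2 * logMean (heat Q t ρ u) (heat Q t ρ v) * Q u v * π u
      ≤ B / S := le_trans hUB1 (by rw [hUB2, hSA]; exact hEval)
  have chain : gam Q (heat Q t f) x * π x * (logMean 1 ε / S) ≤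
      Real.exp (-2 * κ * t) * ((1 / 2) * (B / S)) := by
    refine le_trans hLHS (le_trans key' ?_)
    exact mul_le_mul_of_nonneg_left
      (mul_le_mul_of_nonneg_left h8 (by norm_num)) hexp0
  have hfin : gam Q (heat Q t f) x * π x * logMean 1 ε ≤ Real.exp (-2 * κ * t) * (B / 2) := by
    have hmul := mul_le_mul_of_nonneg_right chain hSpos.le
    calc gam Q (heat Q t f) x * π x * logMean 1 ε
        = gam Q (heat Q t f) x * π x * (logMean 1 ε / S) * S := by
          field_simp
      _ ≤ Real.exp (-2 * κ * t) * ((1 / 2) * (B / S)) * S := hmul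
      _ = Real.exp (-2 * κ * t) * (B / 2) := by
          field_simp
  calc gam Q (heat Q t f) x * π x
      = gam Q (heat Q t f) x * π x * logMean 1 ε / logMean 1 ε := by
        field_simp
    _ ≤ Real.exp (-2 * κ * t) * (B / 2) / logMean 1 ε :=
        (div_le_div_iff_of_pos_right hθ).mpr hfin
    _ = Real.exp (-2 * κ * t) / (2 * logMean 1 ε) * B := by
        field_simp
end

section
/- Let X be a finite set and Q an irreducible, reversible Markov kernel on X with stationary measure π. Assume the global gradient estimate with the ARITHMETIC mean and constant κ holds: for all probability densities ρ ∈ D(X), all f : X → ℝ and all t ≥ 0, (1/2)·Σ_{u,v} (P_t f(v) − P_t f(u))² · ((ρ(u)+ρ(v))/2) · Q(u,v) π(u) ≤ e^{−2κt} · (1/2)·Σ_{u,v} (f(v) − f(u))² · ((P_t ρ(u)+P_t ρ(v))/2) · Q(u,v) π(u). Then the Bakry–Émery pointwise gradient estimate holds: for all f : X → ℝ, x ∈ X and t ≥ 0, Γ(P_t f)(x) ≤ e^{−2κt} · P_t Γ(f)(x). -/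
open Matrix in
/-- If `M` is symmetric w.r.t. the weight `π`, so is its matrix exponential. -/
lemma exp_pi_symm {X : Type*} [Fintype X] [DecidableEq X] (π : X → ℝ)
    (hπpos : ∀ x, 0 < π x) (M : Matrix X X ℝ)
    (hsym : ∀ u v, π u * M u v = π v * M v u) :
    ∀ u v, π u * (NormedSpace.exp M) u v = π v * (NormedSpace.exp M) v u := by
  have hD : IsUnit (Matrix.diagonal π) := by
    rw [Matrix.isUnit_iff_isUnit_det, Matrix.det_diagonal]
    exact IsUnit.of_mul_eq_one (∏ i, (π i)⁻¹)
      (by rw [← Finset.prod_mul_distrib]; simp [(fun i => (hπpos i).ne')])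
  have hDM : Matrix.diagonal π * M = Mᵀ * Matrix.diagonal π := by
    ext u v
    rw [Matrix.diagonal_mul, Matrix.mul_diagonal, Matrix.transpose_apply]
    rw [hsym u v]; ring
  have hMT : Mᵀ = Matrix.diagonal π * M * (Matrix.diagonal π)⁻¹ := by
    rw [hDM, Matrix.mul_nonsing_inv_cancel_right _ _ ((Matrix.isUnit_iff_isUnit_det _).mp hD)]
  have h1 : NormedSpace.exp Mᵀ
      = Matrix.diagonal π * NormedSpace.exp M * (Matrix.diagonal π)⁻¹ := by
    rw [hMT, Matrix.exp_conj _ _ hD]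
  have h2 : (NormedSpace.exp M)ᵀ * Matrix.diagonal π
      = Matrix.diagonal π * NormedSpace.exp M := by
    rw [← Matrix.exp_transpose, h1,
      Matrix.nonsing_inv_mul_cancel_right _ _ ((Matrix.isUnit_iff_isUnit_det _).mp hD)]
  intro u v
  have := congrFun (congrFun h2 u) v
  rw [Matrix.mul_diagonal, Matrix.diagonal_mul, Matrix.transpose_apply] at this
  linarith [this]

/-- Self-adjointness of the heat semigroup w.r.t. the reversible measure `π`. -/
lemma heat_adjoint {X : Type*} [Fintype X] [DecidableEq X] (Q : X → X → ℝ) (π : X → ℝ)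
    (hπpos : ∀ x, 0 < π x) (hrev : ∀ x y, Q x y * π x = Q y x * π y) (t : ℝ)
    (g h : X → ℝ) :
    ∑ u, heat Q t g u * h u * π u = ∑ u, g u * heat Q t h u * π u := by
  set M := t • (Matrix.of fun x y => Q x y - if x = y then (1 : ℝ) else 0) with hM
  have hsym : ∀ u v, π u * M u v = π v * M v u := by
    intro u v
    simp only [hM, Matrix.smul_apply, Matrix.of_apply, smul_eq_mul]
    by_cases huv : u = v
    · subst huv; ring
    · simp only [huv, Ne.symm huv, if_false]
      linear_combination t * (hrev u v)
  have hE := exp_pi_symm π hπpos M hsym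
  simp only [heat, ← hM, Matrix.mulVec, dotProduct, Finset.sum_mul, Finset.mul_sum]
  rw [Finset.sum_comm]
  refine Finset.sum_congr rfl fun v _ => Finset.sum_congr rfl fun u _ => ?_
  linear_combination g v * h u * (hE u v)

/-- The global gradient estimate with the **arithmetic mean** implies the
**Bakry–Émery pointwise gradient estimate** `Γ(P_t f)(x) ≤ e^{-2κt}·P_tΓ(f)(x)`. -/
theorem arithmetic_gradient_estimate_implies_bakry_emery
    {X : Type*} [Fintype X] [DecidableEq X] (Q : X → X → ℝ) (π : X → ℝ) (κ : ℝ)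
    (hQ0 : ∀ x y, 0 ≤ Q x y) (hQ1 : ∀ x, ∑ y, Q x y = 1)
    (hπpos : ∀ x, 0 < π x) (hπ1 : ∑ x, π x = 1)
    (hrev : ∀ x y, Q x y * π x = Q y x * π y)
    (hirr : ∀ x y, ∃ n : ℕ, 0 < ((Matrix.of Q) ^ n) x y)
    (hGE : ∀ ρ : X → ℝ, (∀ z, 0 ≤ ρ z) → ∑ z, ρ z * π z = 1 → ∀ f : X → ℝ, ∀ t : ℝ, 0 ≤ t →
      (1 / 2) * ∑ u, ∑ v,
          (heat Q t f v - heat Q t f u) ^ 2 * ((ρ u + ρ v) / 2) * Q u v * π u ≤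
        Real.exp (-2 * κ * t) * ((1 / 2) * ∑ u, ∑ v,
          (f v - f u) ^ 2 * ((heat Q t ρ u + heat Q t ρ v) / 2) * Q u v * π u)) :
    ∀ f : X → ℝ, ∀ x : X, ∀ t : ℝ, 0 ≤ t →
      gam Q (heat Q t f) x ≤ Real.exp (-2 * κ * t) * heat Q t (gam Q f) x := by
  intro f x t ht
  -- the normalized Dirac density at x
  set ρ : X → ℝ := fun z => if z = x then (π x)⁻¹ else 0 with hρ
  have hρ0 : ∀ z, 0 ≤ ρ z := by
    intro z; simp only [hρ]
    split
    · exact (inv_pos.mpr (hπpos x)).le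
    · exact le_refl 0
  have hρ1 : ∑ z, ρ z * π z = 1 := by
    simp only [hρ, ite_mul, zero_mul, Finset.sum_ite_eq', Finset.mem_univ, if_true]
    exact inv_mul_cancel₀ (hπpos x).ne'
  -- key double-sum identity with the arithmetic mean
  have pair : ∀ (g w : X → ℝ),
      ∑ u, ∑ v, (g v - g u) ^ 2 * ((w u + w v) / 2) * Q u v * π u
        = ∑ u, w u * (π u * gam Q g u) := by
    intro g w
    have h1 : ∀ u v : X, (g v - g u) ^ 2 * ((w u + w v) / 2) * Q u v * π u
        = (1 / 2) * ((g v - g u) ^ 2 * w u * Q u v * π u)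
          + (1 / 2) * ((g v - g u) ^ 2 * w v * Q u v * π u) := fun u v => by ring
    simp only [h1, Finset.sum_add_distrib]
    have hS1 : ∑ u, ∑ v, (1 / 2) * ((g v - g u) ^ 2 * w u * Q u v * π u)
        = (1 / 2) * ∑ u, w u * (π u * gam Q g u) := by
      rw [Finset.mul_sum]
      refine Finset.sum_congr rfl fun u _ => ?_
      simp only [gam, Finset.mul_sum]
      refine Finset.sum_congr rfl fun v _ => by ring
    have hS2 : ∑ u, ∑ v, (1 / 2) * ((g v - g u) ^ 2 * w v * Q u v * π u)
        = (1 / 2) * ∑ v, w v * (π v * gam Q g v) := by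
      rw [Finset.sum_comm, Finset.mul_sum]
      refine Finset.sum_congr rfl fun v _ => ?_
      simp only [gam, Finset.mul_sum]
      refine Finset.sum_congr rfl fun u _ => ?_
      linear_combination ((g v - g u) ^ 2 * w v / 2) * hrev u v
    rw [hS1, hS2]; ring
  have key := hGE ρ hρ0 hρ1 f t ht
  rw [pair (heat Q t f) ρ, pair f (heat Q t ρ)] at key
  -- evaluate the Dirac sums
  have hLHS : ∑ u, ρ u * (π u * gam Q (heat Q t f) u) = gam Q (heat Q t f) x := by
    simp only [hρ, ite_mul, zero_mul, Finset.sum_ite_eq', Finset.mem_univ, if_true]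
    rw [← mul_assoc, inv_mul_cancel₀ (hπpos x).ne', one_mul]
  have hRHS : ∑ u, heat Q t ρ u * (π u * gam Q f u) = heat Q t (gam Q f) x := by
    have e1 : ∑ u, heat Q t ρ u * (π u * gam Q f u)
        = ∑ u, heat Q t ρ u * gam Q f u * π u := Finset.sum_congr rfl fun u _ => by ring
    rw [e1, heat_adjoint Q π hπpos hrev t ρ (gam Q f)]
    simp only [hρ, ite_mul, zero_mul, Finset.sum_ite_eq', Finset.mem_univ, if_true]
    rw [mul_comm ((π x)⁻¹) _, mul_assoc, inv_mul_cancel₀ (hπpos x).ne', mul_one]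
  rw [hLHS, hRHS] at key
  rw [show Real.exp (-2 * κ * t) * (1 / 2 * heat Q t (gam Q f) x)
      = (1 / 2) * (Real.exp (-2 * κ * t) * heat Q t (gam Q f) x) from by ring] at key
  linarith
end

section
/- Let Q^n be the n-dimensional discrete hypercube graph (vertex set {0,1}^n, edges between vertices differing in exactly one coordinate), with simple random walk kernel Q(x,y) = 1/n for y ∼ x and uniform stationary measure π ≡ 2^{−n}, and let θ be the logarithmic mean. Then the global gradient estimate holds with constant κ = 2/n: for all probability densities ρ ∈ D({0,1}^n), all f : {0,1}^n → ℝ and all t ≥ 0, (1/2)·Σ_{u,v} (P_t f(v) − P_t f(u))² θ(ρ(u),ρ(v)) Q(u,v) π(u) ≤ e^{−4t/n} · (1/2)·Σ_{u,v} (f(v) − f(u))² θ(P_t ρ(u), P_t ρ(v)) Q(u,v) π(u). -/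
/- ===== auxiliary lemmas ===== -/

open MeasureTheory intervalIntegral in
lemma logMean_eq_integral {x y : ℝ} (hx : 0 ≤ x) (hy : 0 ≤ y) :
    logMean x y = ∫ s in (0:ℝ)..1, x ^ s * y ^ (1 - s) := by
  rcases eq_or_lt_of_le hx with hx0 | hx0
  · have h0 : ∀ᵐ s : ℝ, s ∈ Set.uIoc (0:ℝ) 1 → x ^ s * y ^ (1 - s) = 0 := by
      filter_upwards with s hs
      rw [Set.uIoc_of_le zero_le_one] at hs
      rw [← hx0, Real.zero_rpow (ne_of_gt hs.1), zero_mul]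
    rw [integral_congr_ae h0, intervalIntegral.integral_zero, logMean, if_pos (Or.inl hx0.symm)]
  rcases eq_or_lt_of_le hy with hy0 | hy0
  · have h1 : (volume : Measure ℝ) {(1:ℝ)} = 0 := measure_singleton 1
    have h0 : ∀ᵐ s : ℝ, s ∈ Set.uIoc (0:ℝ) 1 → x ^ s * y ^ (1 - s) = 0 := by
      filter_upwards [measure_eq_zero_iff_ae_notMem.mp h1] with s hs1 hs
      rw [← hy0, Real.zero_rpow (sub_ne_zero.mpr fun h => hs1 (by rw [h]; rfl)), mul_zero]
    rw [integral_congr_ae h0, intervalIntegral.integral_zero, logMean, if_pos (Or.inr hy0.symm)]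
  · have key : ∀ s : ℝ, x ^ s * y ^ (1 - s)
        = y * Real.exp (s * (Real.log x - Real.log y)) := by
      intro s
      rw [Real.rpow_def_of_pos hx0, Real.rpow_def_of_pos hy0]
      rw [← Real.exp_add, mul_comm y, ← Real.exp_log hy0, ← Real.exp_add]
      congr 1
      rw [Real.log_exp]
      ring
    simp_rw [key]
    rw [intervalIntegral.integral_const_mul]
    set c := Real.log x - Real.log y with hc
    rcases eq_or_ne c 0 with hc0 | hc0
    · have hxy : x = y := by
        have := Real.log_injOn_pos (Set.mem_Ioi.mpr hx0) (Set.mem_Ioi.mpr hy0)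
        exact this (by linarith [sub_eq_zero.mp hc0])
      simp only [hc0, mul_zero, Real.exp_zero]
      rw [intervalIntegral.integral_const]
      simp only [sub_zero, one_smul, mul_one]
      rw [logMean, if_neg (by push_neg; exact ⟨ne_of_gt hx0, ne_of_gt hy0⟩), if_pos hxy, hxy]
    · have : ∫ s in (0:ℝ)..1, Real.exp (s * c) = (Real.exp c - 1) / c := by
        have := integral_comp_mul_right (fun u => Real.exp u) (a := 0) (b := 1) hc0
        simp only [zero_mul, one_mul] at this
        rw [this, integral_exp, Real.exp_zero, smul_eq_mul]
        ring
      rw [this]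
      have hxyne : x ≠ y := fun h => hc0 (by rw [hc, h, sub_self])
      rw [logMean, if_neg (by push_neg; exact ⟨ne_of_gt hx0, ne_of_gt hy0⟩), if_neg hxyne]
      have hec : Real.exp c = x / y := by
        rw [hc, Real.exp_sub, Real.exp_log hx0, Real.exp_log hy0]
      rw [hec, ← hc]
      field_simp

open MeasureTheory intervalIntegral in
lemma logMean_integrand_integrable {x y : ℝ} (hx : 0 ≤ x) (hy : 0 ≤ y) :
    IntervalIntegrable (fun s => x ^ s * y ^ (1 - s)) volume 0 1 := by
  rcases eq_or_lt_of_le hx with hx0 | hx0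
  · have h0 : ∀ᵐ s : ℝ, s ∈ Set.uIoc (0:ℝ) 1 → (0:ℝ) = x ^ s * y ^ (1 - s) := by
      filter_upwards with s hs
      rw [Set.uIoc_of_le zero_le_one] at hs
      rw [← hx0, Real.zero_rpow (ne_of_gt hs.1), zero_mul]
    exact (_root_.intervalIntegrable_const (c := (0:ℝ))).congr_ae
      ((ae_restrict_iff' measurableSet_uIoc).mpr h0)
  rcases eq_or_lt_of_le hy with hy0 | hy0
  · have h1 : (volume : Measure ℝ) {(1:ℝ)} = 0 := measure_singleton 1
    have h0 : ∀ᵐ s : ℝ, s ∈ Set.uIoc (0:ℝ) 1 → (0:ℝ) = x ^ s * y ^ (1 - s) := by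
      filter_upwards [measure_eq_zero_iff_ae_notMem.mp h1] with s hs1 hs
      rw [← hy0, Real.zero_rpow (sub_ne_zero.mpr fun h => hs1 (by rw [h]; rfl)), mul_zero]
    exact (_root_.intervalIntegrable_const (c := (0:ℝ))).congr_ae
      ((ae_restrict_iff' measurableSet_uIoc).mpr h0)
  · have key : (fun s : ℝ => x ^ s * y ^ (1 - s))
        = fun s => y * Real.exp (s * (Real.log x - Real.log y)) := by
      funext s
      rw [Real.rpow_def_of_pos hx0, Real.rpow_def_of_pos hy0]
      rw [← Real.exp_add, mul_comm y, ← Real.exp_log hy0, ← Real.exp_add]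
      congr 1
      rw [Real.log_exp]
      ring
    rw [key]
    exact (Continuous.intervalIntegrable (by fun_prop) 0 1)

lemma logMean_nonneg_s14 {x y : ℝ} (hx : 0 ≤ x) (hy : 0 ≤ y) : 0 ≤ logMean x y := by
  unfold logMean
  split
  · exact le_refl 0
  · rename_i h
    push_neg at h
    have hx0 : 0 < x := lt_of_le_of_ne hx (Ne.symm h.1)
    have hy0 : 0 < y := lt_of_le_of_ne hy (Ne.symm h.2)
    split
    · exact le_of_lt hx0
    · rename_i hne
      rcases lt_or_gt_of_ne hne with hlt | hgt
      · rw [← neg_sub y x, ← neg_sub (Real.log y) (Real.log x), neg_div_neg_eq]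
        apply div_nonneg (by linarith)
        simp only [sub_nonneg]
        exact Real.log_le_log hx0 (le_of_lt hlt)
      · apply div_nonneg (by linarith)
        simp only [sub_nonneg]
        exact Real.log_le_log hy0 (le_of_lt hgt)

lemma logMean_symm_s14 (x y : ℝ) : logMean x y = logMean y x := by
  unfold logMean
  by_cases h0 : x = 0 ∨ y = 0
  · rw [if_pos h0, if_pos (Or.symm h0)]
  · rw [if_neg h0, if_neg (fun h => h0 (Or.symm h))]
    by_cases hxy : x = y
    · rw [if_pos hxy, if_pos hxy.symm, hxy]
    · rw [if_neg hxy, if_neg (Ne.symm hxy), ← neg_sub y x, ← neg_sub (Real.log y) (Real.log x),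
        neg_div_neg_eq]

lemma logMean_smul {x y c : ℝ} (hc : 0 ≤ c) (hx : 0 ≤ x) (hy : 0 ≤ y) :
    logMean (c * x) (c * y) = c * logMean x y := by
  rcases eq_or_lt_of_le hc with hc0 | hc0
  · simp [logMean, ← hc0]
  · rw [logMean_eq_integral (mul_nonneg hc hx) (mul_nonneg hc hy), logMean_eq_integral hx hy,
      ← intervalIntegral.integral_const_mul]
    apply intervalIntegral.integral_congr
    intro s _
    have hcc : c ^ s * c ^ (1 - s) = c := by
      rw [← Real.rpow_add hc0]
      norm_num
    simp only [Real.mul_rpow hc hx, Real.mul_rpow hc hy]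
    calc c ^ s * x ^ s * (c ^ (1 - s) * y ^ (1 - s))
        = (c ^ s * c ^ (1 - s)) * (x ^ s * y ^ (1 - s)) := by ring
      _ = c * (x ^ s * y ^ (1 - s)) := by rw [hcc]

lemma geom_superadd {ι : Type*} (s : Finset ι) (x y : ι → ℝ)
    (hx : ∀ i ∈ s, 0 ≤ x i) (hy : ∀ i ∈ s, 0 ≤ y i) {t : ℝ} (ht0 : 0 ≤ t) (ht1 : t ≤ 1) :
    ∑ i ∈ s, x i ^ t * y i ^ (1 - t) ≤ (∑ i ∈ s, x i) ^ t * (∑ i ∈ s, y i) ^ (1 - t) := by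
  set X := ∑ i ∈ s, x i with hX
  set Y := ∑ i ∈ s, y i with hY
  have hXnn : 0 ≤ X := Finset.sum_nonneg hx
  have hYnn : 0 ≤ Y := Finset.sum_nonneg hy
  rcases eq_or_lt_of_le hXnn with hX0 | hX0
  · have hxz : ∀ i ∈ s, x i = 0 := by
      intro i hi
      exact (Finset.sum_eq_zero_iff_of_nonneg hx).mp hX0.symm i hi
    rcases eq_or_lt_of_le ht0 with ht | ht
    · simp only [← ht, Real.rpow_zero, one_mul, sub_zero, Real.rpow_one]
      exact le_of_eq rfl
    · have : ∀ i ∈ s, x i ^ t * y i ^ (1 - t) = 0 := by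
        intro i hi
        rw [hxz i hi, Real.zero_rpow (ne_of_gt ht), zero_mul]
      rw [Finset.sum_congr rfl this, Finset.sum_const, smul_zero]
      exact mul_nonneg (Real.rpow_nonneg hXnn t) (Real.rpow_nonneg hYnn (1 - t))
  rcases eq_or_lt_of_le hYnn with hY0 | hY0
  · have hyz : ∀ i ∈ s, y i = 0 := by
      intro i hi
      exact (Finset.sum_eq_zero_iff_of_nonneg hy).mp hY0.symm i hi
    rcases eq_or_ne t 1 with ht | ht
    · simp only [ht, Real.rpow_one, sub_self, Real.rpow_zero, mul_one]
      exact le_of_eq rfl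
    · have : ∀ i ∈ s, x i ^ t * y i ^ (1 - t) = 0 := by
        intro i hi
        rw [hyz i hi, Real.zero_rpow (sub_ne_zero.mpr (Ne.symm ht)), mul_zero]
      rw [Finset.sum_congr rfl this, Finset.sum_const, smul_zero]
      exact mul_nonneg (Real.rpow_nonneg hXnn t) (Real.rpow_nonneg hYnn (1 - t))
  · have key : ∀ i ∈ s, x i ^ t * y i ^ (1 - t)
        ≤ X ^ t * Y ^ (1 - t) * (t * (x i / X) + (1 - t) * (y i / Y)) := by
      intro i hi
      have h := Real.geom_mean_le_arith_mean2_weighted (w₁ := t) (w₂ := 1 - t)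
        (p₁ := x i / X) (p₂ := y i / Y) ht0 (by linarith)
        (div_nonneg (hx i hi) hXnn) (div_nonneg (hy i hi) hYnn) (by ring)
      have hXt : (0:ℝ) < X ^ t := Real.rpow_pos_of_pos hX0 t
      have hYt : (0:ℝ) < Y ^ (1 - t) := Real.rpow_pos_of_pos hY0 (1 - t)
      have hmul := mul_le_mul_of_nonneg_left h (le_of_lt (mul_pos hXt hYt))
      calc x i ^ t * y i ^ (1 - t)
          = X ^ t * Y ^ (1 - t) * ((x i / X) ^ t * (y i / Y) ^ (1 - t)) := by
            rw [Real.div_rpow (hx i hi) hXnn, Real.div_rpow (hy i hi) hYnn]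
            field_simp
        _ ≤ _ := hmul
    calc ∑ i ∈ s, x i ^ t * y i ^ (1 - t)
        ≤ ∑ i ∈ s, X ^ t * Y ^ (1 - t) * (t * (x i / X) + (1 - t) * (y i / Y)) :=
          Finset.sum_le_sum key
      _ = X ^ t * Y ^ (1 - t) * (t * (X / X) + (1 - t) * (Y / Y)) := by
          rw [← Finset.mul_sum]
          congr 1
          rw [Finset.sum_add_distrib, ← Finset.mul_sum, ← Finset.mul_sum,
            ← Finset.sum_div, ← Finset.sum_div]
      _ = X ^ t * Y ^ (1 - t) := by
          rw [div_self (ne_of_gt hX0), div_self (ne_of_gt hY0)]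
          ring

lemma logMean_superadd {ι : Type*} (s : Finset ι) (x y : ι → ℝ)
    (hx : ∀ i ∈ s, 0 ≤ x i) (hy : ∀ i ∈ s, 0 ≤ y i) :
    ∑ i ∈ s, logMean (x i) (y i) ≤ logMean (∑ i ∈ s, x i) (∑ i ∈ s, y i) := by
  have hXnn : 0 ≤ ∑ i ∈ s, x i := Finset.sum_nonneg hx
  have hYnn : 0 ≤ ∑ i ∈ s, y i := Finset.sum_nonneg hy
  have hrw : ∀ i ∈ s, logMean (x i) (y i)
      = ∫ u in (0:ℝ)..1, x i ^ u * y i ^ (1 - u) := fun i hi =>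
    logMean_eq_integral (hx i hi) (hy i hi)
  rw [Finset.sum_congr rfl hrw, logMean_eq_integral hXnn hYnn,
    ← intervalIntegral.integral_finset_sum
      (fun i (hi : i ∈ s) => logMean_integrand_integrable (hx i hi) (hy i hi))]
  apply intervalIntegral.integral_mono_on zero_le_one
  · have := IntervalIntegrable.sum s (μ := MeasureTheory.volume) (a := (0:ℝ)) (b := 1)
      (f := fun i u => x i ^ u * y i ^ (1 - u))
      (fun i hi => logMean_integrand_integrable (hx i hi) (hy i hi))
    convert this using 1
    · rfl
    funext u
    simp [Finset.sum_apply]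
  · exact logMean_integrand_integrable hXnn hYnn
  · intro u hu
    exact geom_superadd s x y hx hy hu.1 hu.2

lemma logMean_concave {ι : Type*} (s : Finset ι) (lam x y : ι → ℝ)
    (hl : ∀ i ∈ s, 0 ≤ lam i) (hx : ∀ i ∈ s, 0 ≤ x i) (hy : ∀ i ∈ s, 0 ≤ y i) :
    ∑ i ∈ s, lam i * logMean (x i) (y i)
      ≤ logMean (∑ i ∈ s, lam i * x i) (∑ i ∈ s, lam i * y i) := by
  have hrw : ∀ i ∈ s, lam i * logMean (x i) (y i) = logMean (lam i * x i) (lam i * y i) :=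
    fun i hi => (logMean_smul (hl i hi) (hx i hi) (hy i hi)).symm
  rw [Finset.sum_congr rfl hrw]
  exact logMean_superadd s _ _ (fun i hi => mul_nonneg (hl i hi) (hx i hi))
    (fun i hi => mul_nonneg (hl i hi) (hy i hi))

lemma logMean_mix {a b x y : ℝ} (ha : 0 ≤ a) (hb : 0 ≤ b) (hab : a + b = 1)
    (hx : 0 ≤ x) (hy : 0 ≤ y) :
    logMean x y ≤ logMean (a * x + b * y) (a * y + b * x) := by
  have h1 : logMean (a * x) (a * y) + logMean (b * y) (b * x)
      ≤ logMean (a * x + b * y) (a * y + b * x) := by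
    have := logMean_superadd {0, 1} (fun i : Fin 2 => if i = 0 then a * x else b * y)
      (fun i : Fin 2 => if i = 0 then a * y else b * x) ?_ ?_
    · simpa [Finset.sum_pair (by decide : (0:Fin 2) ≠ 1)] using this
    · intro i _
      by_cases h : i = 0 <;> simp [h, mul_nonneg, ha, hb, hx, hy, mul_nonneg ha hy,
        mul_nonneg hb hx, mul_nonneg ha hx, mul_nonneg hb hy]
    · intro i _
      by_cases h : i = 0 <;> simp [h, mul_nonneg ha hy, mul_nonneg hb hx]
  have h2 : logMean (a * x) (a * y) = a * logMean x y := logMean_smul ha hx hy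
  have h3 : logMean (b * y) (b * x) = b * logMean x y := by
    rw [logMean_smul hb hy hx, logMean_symm_s14]
  have h4 : a * logMean x y + b * logMean x y = logMean x y := by
    rw [← add_mul, hab, one_mul]
  linarith


namespace HGE

variable {n : ℕ}

def flipv (i : Fin n) (u : Fin n → Bool) : Fin n → Bool := Function.update u i (!u i)

lemma flipv_apply_self (i : Fin n) (u : Fin n → Bool) : flipv i u i = !u i := by
  simp [flipv]

lemma flipv_apply_ne (i j : Fin n) (u : Fin n → Bool) (h : j ≠ i) : flipv i u j = u j := by
  simp [flipv, Function.update_of_ne h]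

lemma flipv_flipv (i : Fin n) (u : Fin n → Bool) : flipv i (flipv i u) = u := by
  funext j
  by_cases h : j = i
  · subst h; simp [flipv]
  · rw [flipv_apply_ne i j _ h, flipv_apply_ne i j _ h]

lemma flipv_involutive (i : Fin n) : Function.Involutive (flipv (n := n) i) :=
  fun u => flipv_flipv i u

noncomputable def aa (n : ℕ) (t : ℝ) : ℝ := (1 + Real.exp (-2*t/n))/2
noncomputable def bb (n : ℕ) (t : ℝ) : ℝ := (1 - Real.exp (-2*t/n))/2

noncomputable def kerM (n : ℕ) (t : ℝ) : Matrix (Fin n → Bool) (Fin n → Bool) ℝ :=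
  Matrix.of fun u v => ∏ i,
    (if u i = v i then (1 + Real.exp (-2*t/n))/2 else (1 - Real.exp (-2*t/n))/2)

lemma kerM_apply (t : ℝ) (u v : Fin n → Bool) :
    kerM n t u v = ∏ i, (if u i = v i then aa n t else bb n t) := rfl

lemma aa_add_bb (t : ℝ) : aa n t + bb n t = 1 := by unfold aa bb; ring

lemma aa_sub_bb (t : ℝ) : aa n t - bb n t = Real.exp (-2*t/n) := by unfold aa bb; ring

lemma aa_nonneg (t : ℝ) : 0 ≤ aa n t := by
  unfold aa
  have := Real.exp_nonneg (-2*t/n)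
  linarith

lemma bb_nonneg {t : ℝ} (hn : 0 < n) (ht : 0 ≤ t) : 0 ≤ bb n t := by
  unfold bb
  have h1 : Real.exp (-2*t/n) ≤ 1 := by
    rw [Real.exp_le_one_iff]
    apply div_nonpos_of_nonpos_of_nonneg (by linarith) (Nat.cast_nonneg n)
  linarith

/-- the reduced kernel that fixes coordinate `i` -/
noncomputable def Ered (n : ℕ) (t : ℝ) (i : Fin n) (u w : Fin n → Bool) : ℝ :=
  ∏ j ∈ Finset.univ.erase i, (if u j = w j then aa n t else bb n t)

noncomputable def Kred (n : ℕ) (t : ℝ) (i : Fin n) (u w : Fin n → Bool) : ℝ :=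
  (if u i = w i then 1 else 0) * Ered n t i u w

lemma Ered_nonneg {t : ℝ} (hn : 0 < n) (ht : 0 ≤ t) (i : Fin n) (u w : Fin n → Bool) :
    0 ≤ Ered n t i u w := by
  apply Finset.prod_nonneg
  intro j _
  split
  · exact aa_nonneg t
  · exact bb_nonneg hn ht

lemma Kred_nonneg {t : ℝ} (hn : 0 < n) (ht : 0 ≤ t) (i : Fin n) (u w : Fin n → Bool) :
    0 ≤ Kred n t i u w :=
  mul_nonneg (by split <;> norm_num) (Ered_nonneg hn ht i u w)

lemma Ered_symm (t : ℝ) (i : Fin n) (u w : Fin n → Bool) :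
    Ered n t i u w = Ered n t i w u := by
  unfold Ered
  apply Finset.prod_congr rfl
  intro j _
  congr 1
  simp [eq_comm]

lemma Kred_symm (t : ℝ) (i : Fin n) (u w : Fin n → Bool) :
    Kred n t i u w = Kred n t i w u := by
  unfold Kred
  rw [Ered_symm]
  congr 1
  simp [eq_comm]

lemma Ered_flip_right (t : ℝ) (i : Fin n) (u w : Fin n → Bool) :
    Ered n t i u (flipv i w) = Ered n t i u w := by
  unfold Ered
  apply Finset.prod_congr rfl
  intro j hj
  rw [flipv_apply_ne i j w (Finset.mem_erase.mp hj).1]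

lemma Ered_flip_left (t : ℝ) (i : Fin n) (u w : Fin n → Bool) :
    Ered n t i (flipv i u) w = Ered n t i u w := by
  rw [Ered_symm, Ered_flip_right, Ered_symm]

/-- split off coordinate `i` from the kernel -/
lemma kerM_split (t : ℝ) (i : Fin n) (u v : Fin n → Bool) :
    kerM n t u v = (if u i = v i then aa n t else bb n t) * Ered n t i u v := by
  rw [kerM_apply, ← Finset.mul_prod_erase Finset.univ _ (Finset.mem_univ i)]
  rfl

lemma kerM_flip_split (t : ℝ) (i : Fin n) (u v : Fin n → Bool) :
    kerM n t (flipv i u) v = (if u i = v i then bb n t else aa n t) * Ered n t i u v := by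
  rw [kerM_split t i (flipv i u) v, Ered_flip_left, flipv_apply_self]
  congr 1
  cases hu : u i <;> cases hv : v i <;> simp

lemma Kred_eq_prod (t : ℝ) (i : Fin n) (u w : Fin n → Bool) :
    Kred n t i u w = ∏ j, (if j = i then (if u j = w j then (1:ℝ) else 0)
      else (if u j = w j then aa n t else bb n t)) := by
  rw [← Finset.mul_prod_erase Finset.univ _ (Finset.mem_univ i), if_pos rfl]
  unfold Kred Ered
  congr 1
  apply Finset.prod_congr rfl
  intro j hj
  rw [if_neg (Finset.mem_erase.mp hj).1]

/-- sum over the hypercube factorizes into a product of Boolean sums -/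
lemma sum_prod_bool (F : Fin n → Bool → ℝ) :
    ∑ v : Fin n → Bool, ∏ i, F i (v i) = ∏ i, (F i false + F i true) := by
  rw [← Fintype.prod_sum (fun i (b : Bool) => F i b)]
  apply Finset.prod_congr rfl
  intro i _
  rw [Fintype.sum_bool]
  ring

lemma sum_Kred (t : ℝ) (i : Fin n) (u : Fin n → Bool) :
    ∑ w, Kred n t i u w = 1 := by
  have h : ∀ w, Kred n t i u w = ∏ j, (fun j b => if j = i then (if u j = b then (1:ℝ) else 0)
      else (if u j = b then aa n t else bb n t)) j (w j) := by
    intro w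
    exact Kred_eq_prod t i u w
  rw [Finset.sum_congr rfl fun w _ => h w,
    sum_prod_bool (fun j b => if j = i then (if u j = b then (1:ℝ) else 0)
      else (if u j = b then aa n t else bb n t))]
  apply Finset.prod_eq_one
  intro j _
  by_cases hj : j = i <;> cases hu : u j <;> simp [hj] <;> linarith [aa_add_bb (n := n) t]

/-- reindex a sum by the flip involution -/
lemma sum_flip (i : Fin n) (A : (Fin n → Bool) → ℝ) :
    ∑ w, A (flipv i w) = ∑ w, A w :=
  Fintype.sum_equiv ((flipv_involutive i).toPerm) _ _ (fun w => rfl)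

lemma sum_eq_of_pair (i : Fin n) (A B : (Fin n → Bool) → ℝ)
    (h : ∀ w, A w + A (flipv i w) = B w + B (flipv i w)) :
    ∑ w, A w = ∑ w, B w := by
  have hsum : ∑ w, (A w + A (flipv i w)) = ∑ w, (B w + B (flipv i w)) :=
    Finset.sum_congr rfl fun w _ => h w
  rw [Finset.sum_add_distrib, Finset.sum_add_distrib, sum_flip i A, sum_flip i B] at hsum
  linarith


lemma mulVec_sum (t : ℝ) (f : (Fin n → Bool) → ℝ) (u : Fin n → Bool) :
    (kerM n t).mulVec f u = ∑ v, kerM n t u v * f v := rfl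

/-- intertwining: the discrete gradient of the heat kernel -/
lemma heat_flip_sub (t : ℝ) (i : Fin n) (u : Fin n → Bool) (f : (Fin n → Bool) → ℝ) :
    (kerM n t).mulVec f (flipv i u) - (kerM n t).mulVec f u
      = Real.exp (-2*t/n) * ∑ w, Kred n t i u w * (f (flipv i w) - f w) := by
  rw [mulVec_sum, mulVec_sum, ← Finset.sum_sub_distrib]
  have hterm : ∀ v, kerM n t (flipv i u) v * f v - kerM n t u v * f v
      = Real.exp (-2*t/n) * ((if u i = v i then (-1:ℝ) else 1) * Ered n t i u v * f v) := by
    intro v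
    rw [kerM_flip_split, kerM_split]
    rw [← aa_sub_bb (n := n) t]
    cases hu : u i <;> cases hv : v i <;> simp [hu, hv] <;> ring
  rw [Finset.sum_congr rfl fun v _ => hterm v, ← Finset.mul_sum]
  congr 1
  apply sum_eq_of_pair i
  intro w
  have h1 : Ered n t i u (flipv i w) = Ered n t i u w := Ered_flip_right t i u w
  have h2 : flipv i (flipv i w) = w := flipv_flipv i w
  unfold Kred
  rw [h1, h2, flipv_apply_self]
  cases hu : u i <;> cases hw : w i <;> simp [hu, hw] <;> ring

/-- the heat kernel applied to `ρ`, in paired form -/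
lemma heat_pair (t : ℝ) (i : Fin n) (u : Fin n → Bool) (ρ : (Fin n → Bool) → ℝ) :
    (kerM n t).mulVec ρ u
      = ∑ w, Kred n t i u w * (aa n t * ρ w + bb n t * ρ (flipv i w)) := by
  rw [mulVec_sum]
  have hterm : ∀ v, kerM n t u v * ρ v
      = (if u i = v i then aa n t else bb n t) * Ered n t i u v * ρ v := by
    intro v
    rw [kerM_split]
  rw [Finset.sum_congr rfl fun v _ => hterm v]
  apply sum_eq_of_pair i
  intro w
  have h1 : Ered n t i u (flipv i w) = Ered n t i u w := Ered_flip_right t i u w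
  have h2 : flipv i (flipv i w) = w := flipv_flipv i w
  unfold Kred
  rw [h1, h2, flipv_apply_self]
  cases hu : u i <;> cases hw : w i <;> simp [hu, hw] <;> ring

lemma heat_pair_flip (t : ℝ) (i : Fin n) (u : Fin n → Bool) (ρ : (Fin n → Bool) → ℝ) :
    (kerM n t).mulVec ρ (flipv i u)
      = ∑ w, Kred n t i u w * (bb n t * ρ w + aa n t * ρ (flipv i w)) := by
  rw [mulVec_sum]
  have hterm : ∀ v, kerM n t (flipv i u) v * ρ v
      = (if u i = v i then bb n t else aa n t) * Ered n t i u v * ρ v := by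
    intro v
    rw [kerM_flip_split]
  rw [Finset.sum_congr rfl fun v _ => hterm v]
  apply sum_eq_of_pair i
  intro w
  have h1 : Ered n t i u (flipv i w) = Ered n t i u w := Ered_flip_right t i u w
  have h2 : flipv i (flipv i w) = w := flipv_flipv i w
  unfold Kred
  rw [h1, h2, flipv_apply_self]
  cases hu : u i <;> cases hw : w i <;> simp [hu, hw] <;> ring


/-- neighbor reindexing: sum over neighbors of `u` equals a sum over coordinates -/
lemma sum_neighbors (u : Fin n → Bool) (r : ℝ) (g : (Fin n → Bool) → ℝ) :
    ∑ v, (if (Finset.univ.filter fun i => u i ≠ v i).card = 1 then r else 0) * g v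
      = r * ∑ i, g (flipv i u) := by
  have hset : (Finset.univ.filter
      fun v : Fin n → Bool => (Finset.univ.filter fun i => u i ≠ v i).card = 1)
      = Finset.image (fun i => flipv i u) Finset.univ := by
    ext v
    simp only [Finset.mem_filter, Finset.mem_univ, true_and, Finset.mem_image]
    constructor
    · intro hv
      obtain ⟨i₀, hi₀⟩ := Finset.card_eq_one.mp hv
      refine ⟨i₀, ?_⟩
      have hi₀mem : i₀ ∈ Finset.univ.filter fun i => u i ≠ v i := by
        rw [hi₀]; exact Finset.mem_singleton_self i₀
      have hne : u i₀ ≠ v i₀ := (Finset.mem_filter.mp hi₀mem).2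
      funext j
      by_cases h : j = i₀
      · subst h
        rw [flipv_apply_self]
        revert hne
        cases u j <;> cases v j <;> simp
      · rw [flipv_apply_ne i₀ j u h]
        by_contra hne2
        have : j ∈ Finset.univ.filter fun i => u i ≠ v i :=
          Finset.mem_filter.mpr ⟨Finset.mem_univ j, fun he => hne2 he⟩
        rw [hi₀, Finset.mem_singleton] at this
        exact h this
    · rintro ⟨i, rfl⟩
      have : (Finset.univ.filter fun j => u j ≠ flipv i u j) = {i} := by
        ext j
        simp only [Finset.mem_filter, Finset.mem_univ, true_and, Finset.mem_singleton]
        constructor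
        · intro hj
          by_contra h
          exact hj (flipv_apply_ne i j u h).symm
        · rintro rfl
          rw [flipv_apply_self]
          cases u j <;> simp
      rw [this, Finset.card_singleton]
  have hinj : ∀ i ∈ Finset.univ, ∀ j ∈ Finset.univ,
      flipv i u = flipv (n := n) j u → i = j := by
    intro i _ j _ h
    by_contra hij
    have h1 : flipv i u i = flipv j u i := congrFun h i
    rw [flipv_apply_self, flipv_apply_ne j i u hij] at h1
    revert h1
    cases u i <;> simp
  calc ∑ v, (if (Finset.univ.filter fun i => u i ≠ v i).card = 1 then r else 0) * g v
      = ∑ v ∈ Finset.univ.filter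
          (fun v : Fin n → Bool => (Finset.univ.filter fun i => u i ≠ v i).card = 1),
          r * g v := by
        rw [Finset.sum_filter]
        apply Finset.sum_congr rfl
        intro v _
        split <;> ring
    _ = ∑ i, r * g (flipv i u) := by rw [hset, Finset.sum_image hinj]
    _ = r * ∑ i, g (flipv i u) := by rw [Finset.mul_sum]


noncomputable def charM (n : ℕ) : Matrix (Fin n → Bool) (Fin n → Bool) ℝ :=
  Matrix.of fun u S => ∏ i, (if u i && S i then (-1:ℝ) else 1)

def wt (S : Fin n → Bool) : ℕ := (Finset.univ.filter fun i => S i = true).card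

lemma charM_mul_self (n : ℕ) : charM n * charM n = ((2:ℝ)^n) • 1 := by
  ext u w
  rw [Matrix.mul_apply]
  have hterm : ∀ v : Fin n → Bool, charM n u v * charM n v w
      = ∏ i, ((if u i && v i then (-1:ℝ) else 1) * (if v i && w i then (-1:ℝ) else 1)) := by
    intro v
    rw [Finset.prod_mul_distrib]
    rfl
  rw [Finset.sum_congr rfl fun v _ => hterm v]
  rw [sum_prod_bool (fun i b => (if u i && b then (-1:ℝ) else 1) * (if b && w i then (-1:ℝ) else 1))]
  have hfac : ∀ i, ((if u i && false then (-1:ℝ) else 1) * (if false && w i then (-1:ℝ) else 1))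
      + ((if u i && true then (-1:ℝ) else 1) * (if true && w i then (-1:ℝ) else 1))
      = if u i = w i then 2 else 0 := by
    intro i
    cases hu : u i <;> cases hw : w i <;> norm_num
  rw [Finset.prod_congr rfl fun i _ => hfac i]
  by_cases huw : u = w
  · subst huw
    simp only [if_pos rfl, Finset.prod_const, Finset.card_univ, Fintype.card_fun,
      Fintype.card_fin, Fintype.card_bool]
    rw [Matrix.smul_apply, Matrix.one_apply_eq]
    simp [Finset.card_univ]
  · obtain ⟨i, hi⟩ := Function.ne_iff.mp huw
    rw [Finset.prod_eq_zero (Finset.mem_univ i) (by rw [if_neg hi])]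
    rw [Matrix.smul_apply, Matrix.one_apply_ne huw, smul_zero]

lemma charM_mul_inv (n : ℕ) : charM n * (((2:ℝ)^n)⁻¹ • charM n) = 1 := by
  rw [Matrix.mul_smul, charM_mul_self, smul_smul,
    inv_mul_cancel₀ (by positivity : ((2:ℝ)^n) ≠ 0), one_smul]

lemma inv_mul_charM (n : ℕ) : (((2:ℝ)^n)⁻¹ • charM n) * charM n = 1 := by
  rw [Matrix.smul_mul, charM_mul_self, smul_smul,
    inv_mul_cancel₀ (by positivity : ((2:ℝ)^n) ≠ 0), one_smul]

lemma charM_isUnit (n : ℕ) : IsUnit (charM n) :=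
  ⟨⟨charM n, ((2:ℝ)^n)⁻¹ • charM n, charM_mul_inv n, inv_mul_charM n⟩, rfl⟩

lemma charM_inv (n : ℕ) : (charM n)⁻¹ = ((2:ℝ)^n)⁻¹ • charM n :=
  Matrix.inv_eq_right_inv (charM_mul_inv n)

lemma charM_flip (i : Fin n) (u S : Fin n → Bool) :
    charM n (flipv i u) S = (if S i then (-1:ℝ) else 1) * charM n u S := by
  show (∏ j, (if flipv i u j && S j then (-1:ℝ) else 1))
    = (if S i then (-1:ℝ) else 1) * ∏ j, (if u j && S j then (-1:ℝ) else 1)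
  rw [← Finset.mul_prod_erase Finset.univ _ (Finset.mem_univ i),
    ← Finset.mul_prod_erase Finset.univ (fun j => if u j && S j then (-1:ℝ) else 1)
      (Finset.mem_univ i)]
  have hrest : ∏ j ∈ Finset.univ.erase i, (if flipv i u j && S j then (-1:ℝ) else 1)
      = ∏ j ∈ Finset.univ.erase i, (if u j && S j then (-1:ℝ) else 1) := by
    apply Finset.prod_congr rfl
    intro j hj
    rw [flipv_apply_ne i j u (Finset.mem_erase.mp hj).1]
  rw [hrest, flipv_apply_self, ← mul_assoc]
  congr 1
  cases hu : u i <;> cases hS : S i <;> norm_num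

/-- the generator is diagonalized by the characters -/
lemma gen_mul_charM (n : ℕ) (hn : 0 < n) (Q : (Fin n → Bool) → (Fin n → Bool) → ℝ)
    (hQ : ∀ x y, Q x y =
      if (Finset.univ.filter fun i => x i ≠ y i).card = 1 then ((n : ℝ))⁻¹ else 0) :
    (Matrix.of fun x y => Q x y - if x = y then (1:ℝ) else 0) * charM n
      = charM n * Matrix.diagonal (fun S => -2 * (wt S : ℝ) / n) := by
  ext u S
  rw [Matrix.mul_apply, Matrix.mul_diagonal]
  have hsplit : ∀ v, (Matrix.of fun x y => Q x y - if x = y then (1:ℝ) else 0) u v * charM n v S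
      = Q u v * charM n v S - (if u = v then (1:ℝ) else 0) * charM n v S := by
    intro v
    show (Q u v - if u = v then (1:ℝ) else 0) * charM n v S = _
    ring
  rw [Finset.sum_congr rfl fun v _ => hsplit v, Finset.sum_sub_distrib]
  have h2 : ∑ v, (if u = v then (1:ℝ) else 0) * charM n v S = charM n u S := by
    rw [Finset.sum_eq_single u]
    · rw [if_pos rfl, one_mul]
    · intro v _ hv
      rw [if_neg (Ne.symm hv), zero_mul]
    · intro h
      exact absurd (Finset.mem_univ u) h
  have h1 : ∑ v, Q u v * charM n v S = (n:ℝ)⁻¹ * ∑ i, charM n (flipv i u) S := by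
    rw [← sum_neighbors u ((n:ℝ))⁻¹ (fun v => charM n v S)]
    apply Finset.sum_congr rfl
    intro v _
    rw [hQ u v]
  have h3 : ∑ i, charM n (flipv i u) S = ((n:ℝ) - 2 * wt S) * charM n u S := by
    rw [Finset.sum_congr rfl fun i _ => charM_flip i u S, ← Finset.sum_mul]
    congr 1
    have : ∀ i : Fin n, (if S i then (-1:ℝ) else 1) = 1 - 2 * (if S i = true then (1:ℝ) else 0) := by
      intro i
      cases hS : S i <;> norm_num
    rw [Finset.sum_congr rfl fun i _ => this i, Finset.sum_sub_distrib, Finset.sum_const,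
      ← Finset.mul_sum, Finset.sum_boole, wt]
    simp [Finset.card_univ]
  rw [h1, h2, h3]
  have hnne : (n:ℝ) ≠ 0 := Nat.cast_ne_zero.mpr hn.ne'
  field_simp
  ring

/-- the explicit kernel is diagonalized by the characters, with eigenvalues `exp(tλ)` -/
lemma kerM_mul_charM (n : ℕ) (hn : 0 < n) (t : ℝ) :
    kerM n t * charM n
      = charM n * Matrix.diagonal (fun S => Real.exp (t * (-2 * (wt S : ℝ) / n))) := by
  ext u S
  rw [Matrix.mul_apply, Matrix.mul_diagonal]
  set a := (1 + Real.exp (-2*t/n))/2 with ha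
  set b := (1 - Real.exp (-2*t/n))/2 with hb
  set c := Real.exp (-2*t/n) with hc
  have hterm : ∀ v : Fin n → Bool, kerM n t u v * charM n v S
      = ∏ i, ((if u i = v i then a else b) * (if v i && S i then (-1:ℝ) else 1)) := by
    intro v
    rw [Finset.prod_mul_distrib]
    rfl
  rw [Finset.sum_congr rfl fun v _ => hterm v,
    sum_prod_bool (fun i bb => (if u i = bb then a else b) * (if bb && S i then (-1:ℝ) else 1))]
  have hfac : ∀ i, ((if u i = false then a else b) * (if false && S i then (-1:ℝ) else 1))
      + ((if u i = true then a else b) * (if true && S i then (-1:ℝ) else 1))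
      = (if S i then c else 1) * (if u i && S i then (-1:ℝ) else 1) := by
    intro i
    cases hu : u i <;> cases hS : S i <;> simp [ha, hb, hc] <;> ring
  rw [Finset.prod_congr rfl fun i _ => hfac i, Finset.prod_mul_distrib]
  have hpow : ∏ i, (if S i then c else 1) = c ^ wt S := by
    rw [Finset.prod_ite, Finset.prod_const, Finset.prod_const, one_pow, mul_one, wt]
  rw [hpow]
  have hnne : (n:ℝ) ≠ 0 := Nat.cast_ne_zero.mpr hn.ne'
  have hcpow : c ^ wt S = Real.exp (t * (-2 * (wt S : ℝ) / n)) := by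
    have harg : (wt S : ℝ) * (-2 * t / n) = t * (-2 * (wt S : ℝ) / n) := by
      ring
    rw [hc, ← Real.exp_nat_mul, harg]
  rw [hcpow, mul_comm]
  rfl

set_option maxHeartbeats 1000000 in
/-- identification of the heat semigroup with the explicit product kernel -/
lemma heat_eq_kerM (n : ℕ) (hn : 0 < n) (Q : (Fin n → Bool) → (Fin n → Bool) → ℝ)
    (hQ : ∀ x y, Q x y =
      if (Finset.univ.filter fun i => x i ≠ y i).card = 1 then ((n : ℝ))⁻¹ else 0)
    (t : ℝ) (f : (Fin n → Bool) → ℝ) :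
    heat Q t f = (kerM n t).mulVec f := by
  unfold heat
  have hL : (Matrix.of fun x y => Q x y - if x = y then (1:ℝ) else 0)
      = charM n * Matrix.diagonal (fun S => -2 * (wt S : ℝ) / n) * (charM n)⁻¹ := by
    rw [← gen_mul_charM n hn Q hQ, Matrix.mul_assoc, charM_inv, charM_mul_inv, Matrix.mul_one]
  have hK : kerM n t
      = charM n * Matrix.diagonal (fun S => Real.exp (t * (-2 * (wt S : ℝ) / n))) * (charM n)⁻¹ := by
    rw [← kerM_mul_charM n hn t, Matrix.mul_assoc, charM_inv, charM_mul_inv, Matrix.mul_one]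
  have hsmul : t • (charM n * Matrix.diagonal (fun S => -2 * (wt S : ℝ) / n) * (charM n)⁻¹)
      = charM n * Matrix.diagonal (fun S => t * (-2 * (wt S : ℝ) / n)) * (charM n)⁻¹ := by
    rw [← Matrix.smul_mul, ← Matrix.mul_smul]
    congr 2
    rw [← Matrix.diagonal_smul]
    congr 1
  have hexp : (NormedSpace.exp fun S : Fin n → Bool => t * (-2 * (wt S : ℝ) / n))
      = fun S : Fin n → Bool => Real.exp (t * (-2 * (wt S : ℝ) / n)) := by
    funext S
    rw [Pi.coe_exp, ← Real.exp_eq_exp_ℝ]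
  have hM : NormedSpace.exp
      (t • (Matrix.of fun x y => Q x y - if x = y then (1:ℝ) else 0)) = kerM n t := by
    rw [hL, hsmul, Matrix.exp_conj (charM n) _ (charM_isUnit n), Matrix.exp_diagonal, hexp, ← hK]
  rw [hM]


lemma jensen_sq {t : ℝ} (hn : 0 < n) (ht : 0 ≤ t) (i : Fin n) (u : Fin n → Bool)
    (g : (Fin n → Bool) → ℝ) :
    (∑ w, Kred n t i u w * g w) ^ 2 ≤ ∑ w, Kred n t i u w * g w ^ 2 := by
  have hcs := Finset.sum_mul_sq_le_sq_mul_sq Finset.univ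
    (fun w => Real.sqrt (Kred n t i u w)) (fun w => Real.sqrt (Kred n t i u w) * g w)
  have h1 : ∀ w, Real.sqrt (Kred n t i u w) * (Real.sqrt (Kred n t i u w) * g w)
      = Kred n t i u w * g w := by
    intro w
    rw [← mul_assoc, Real.mul_self_sqrt (Kred_nonneg hn ht i u w)]
  have h2 : ∀ w, Real.sqrt (Kred n t i u w) ^ 2 = Kred n t i u w :=
    fun w => Real.sq_sqrt (Kred_nonneg hn ht i u w)
  have h3 : ∀ w, (Real.sqrt (Kred n t i u w) * g w) ^ 2 = Kred n t i u w * g w ^ 2 := by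
    intro w
    rw [mul_pow, h2 w]
  rw [Finset.sum_congr rfl (fun w _ => h1 w), Finset.sum_congr rfl (fun w _ => h2 w),
    Finset.sum_congr rfl (fun w _ => h3 w), sum_Kred, one_mul] at hcs
  exact hcs

lemma concavity_step {t : ℝ} (hn : 0 < n) (ht : 0 ≤ t) (i : Fin n) (u : Fin n → Bool)
    (ρ : (Fin n → Bool) → ℝ) (hρ : ∀ z, 0 ≤ ρ z) :
    ∑ w, Kred n t i u w * logMean (ρ w) (ρ (flipv i w))
      ≤ logMean ((kerM n t).mulVec ρ u) ((kerM n t).mulVec ρ (flipv i u)) := by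
  rw [heat_pair t i u ρ, heat_pair_flip t i u ρ]
  have step1 : ∑ w, Kred n t i u w * logMean (ρ w) (ρ (flipv i w))
      ≤ ∑ w, Kred n t i u w * logMean (aa n t * ρ w + bb n t * ρ (flipv i w))
          (bb n t * ρ w + aa n t * ρ (flipv i w)) := by
    apply Finset.sum_le_sum
    intro w _
    apply mul_le_mul_of_nonneg_left _ (Kred_nonneg hn ht i u w)
    have hmix := logMean_mix (aa_nonneg (n := n) t) (bb_nonneg hn ht) (aa_add_bb (n := n) t)
      (hρ w) (hρ (flipv i w))
    rw [add_comm (aa n t * ρ (flipv i w)) (bb n t * ρ w)] at hmix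
    exact hmix
  refine step1.trans ?_
  exact logMean_concave Finset.univ (fun w => Kred n t i u w)
    (fun w => aa n t * ρ w + bb n t * ρ (flipv i w))
    (fun w => bb n t * ρ w + aa n t * ρ (flipv i w))
    (fun w _ => Kred_nonneg hn ht i u w)
    (fun w _ => add_nonneg (mul_nonneg (aa_nonneg t) (hρ w))
      (mul_nonneg (bb_nonneg hn ht) (hρ (flipv i w))))
    (fun w _ => add_nonneg (mul_nonneg (bb_nonneg hn ht) (hρ w))
      (mul_nonneg (aa_nonneg t) (hρ (flipv i w))))

/-- the per-coordinate gradient estimate -/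
lemma per_coord {t : ℝ} (hn : 0 < n) (ht : 0 ≤ t) (i : Fin n)
    (ρ : (Fin n → Bool) → ℝ) (hρ : ∀ z, 0 ≤ ρ z) (f : (Fin n → Bool) → ℝ) :
    ∑ u, ((kerM n t).mulVec f (flipv i u) - (kerM n t).mulVec f u) ^ 2
        * logMean (ρ u) (ρ (flipv i u))
      ≤ Real.exp (-4*t/n) * ∑ u, (f (flipv i u) - f u) ^ 2
        * logMean ((kerM n t).mulVec ρ u) ((kerM n t).mulVec ρ (flipv i u)) := by
  set c := Real.exp (-2*t/n) with hc
  have hc2 : c ^ 2 = Real.exp (-4*t/n) := by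
    rw [hc, pow_two, ← Real.exp_add]
    congr 1
    ring
  calc ∑ u, ((kerM n t).mulVec f (flipv i u) - (kerM n t).mulVec f u) ^ 2
        * logMean (ρ u) (ρ (flipv i u))
      = c ^ 2 * ∑ u, (∑ w, Kred n t i u w * (f (flipv i w) - f w)) ^ 2
          * logMean (ρ u) (ρ (flipv i u)) := by
        rw [Finset.mul_sum]
        apply Finset.sum_congr rfl
        intro u _
        rw [heat_flip_sub t i u f, mul_pow]
        ring
    _ ≤ c ^ 2 * ∑ u, (∑ w, Kred n t i u w * (f (flipv i w) - f w) ^ 2)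
          * logMean (ρ u) (ρ (flipv i u)) := by
        apply mul_le_mul_of_nonneg_left _ (sq_nonneg c)
        apply Finset.sum_le_sum
        intro u _
        exact mul_le_mul_of_nonneg_right (jensen_sq hn ht i u _)
          (logMean_nonneg_s14 (hρ u) (hρ (flipv i u)))
    _ = c ^ 2 * ∑ w, (f (flipv i w) - f w) ^ 2
          * (∑ u, Kred n t i w u * logMean (ρ u) (ρ (flipv i u))) := by
        congr 1
        calc ∑ u, (∑ w, Kred n t i u w * (f (flipv i w) - f w) ^ 2)
              * logMean (ρ u) (ρ (flipv i u))
            = ∑ u, ∑ w, Kred n t i u w * (f (flipv i w) - f w) ^ 2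
              * logMean (ρ u) (ρ (flipv i u)) := by
              apply Finset.sum_congr rfl
              intro u _
              rw [Finset.sum_mul]
          _ = ∑ w, ∑ u, Kred n t i u w * (f (flipv i w) - f w) ^ 2
              * logMean (ρ u) (ρ (flipv i u)) := Finset.sum_comm
          _ = ∑ w, (f (flipv i w) - f w) ^ 2
              * (∑ u, Kred n t i w u * logMean (ρ u) (ρ (flipv i u))) := by
              apply Finset.sum_congr rfl
              intro w _
              rw [Finset.mul_sum]
              apply Finset.sum_congr rfl
              intro u _
              rw [Kred_symm t i w u]
              ring
    _ ≤ c ^ 2 * ∑ w, (f (flipv i w) - f w) ^ 2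
          * logMean ((kerM n t).mulVec ρ w) ((kerM n t).mulVec ρ (flipv i w)) := by
        apply mul_le_mul_of_nonneg_left _ (sq_nonneg c)
        apply Finset.sum_le_sum
        intro w _
        exact mul_le_mul_of_nonneg_left (concavity_step hn ht i w ρ hρ) (sq_nonneg _)
    _ = Real.exp (-4*t/n) * ∑ u, (f (flipv i u) - f u) ^ 2
          * logMean ((kerM n t).mulVec ρ u) ((kerM n t).mulVec ρ (flipv i u)) := by
        rw [hc2]

end HGE

/-- **Entropic curvature of the hypercube**: the simple random walk on the discrete
hypercube `{0,1}^n` satisfies the global gradient estimate with constant `κ = 2/n`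
(i.e. `e^{-2κt} = e^{-4t/n}`), with the logarithmic mean. -/
theorem hypercube_gradient_estimate (n : ℕ) (hn : 0 < n)
    (Q : (Fin n → Bool) → (Fin n → Bool) → ℝ) (π : (Fin n → Bool) → ℝ)
    (hQ : ∀ x y, Q x y =
      if (Finset.univ.filter fun i => x i ≠ y i).card = 1 then ((n : ℝ))⁻¹ else 0)
    (hπ : ∀ x, π x = ((2 : ℝ) ^ n)⁻¹) :
    ∀ ρ : (Fin n → Bool) → ℝ, (∀ z, 0 ≤ ρ z) → ∑ z, ρ z * π z = 1 →
      ∀ f : (Fin n → Bool) → ℝ, ∀ t : ℝ, 0 ≤ t →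
        (1 / 2) * ∑ u, ∑ v,
            (heat Q t f v - heat Q t f u) ^ 2 * logMean (ρ u) (ρ v) * Q u v * π u ≤
          Real.exp (-4 * t / n) * ((1 / 2) * ∑ u, ∑ v,
            (f v - f u) ^ 2 * logMean (heat Q t ρ u) (heat Q t ρ v) * Q u v * π u) := by
  intro ρ hρ _hρsum f t ht
  open HGE in
  have hkf : heat Q t f = (kerM n t).mulVec f := heat_eq_kerM n hn Q hQ t f
  have hkρ : heat Q t ρ = (kerM n t).mulVec ρ := heat_eq_kerM n hn Q hQ t ρ
  rw [hkf, hkρ]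
  have reduce : ∀ F : (Fin n → Bool) → (Fin n → Bool) → ℝ,
      ∑ u, ∑ v, F u v * Q u v * π u
        = ((2:ℝ)^n)⁻¹ * (((n:ℝ))⁻¹ * ∑ i, ∑ u, F u (HGE.flipv i u)) := by
    intro F
    have hu : ∀ u, ∑ v, F u v * Q u v * π u
        = ((2:ℝ)^n)⁻¹ * (((n:ℝ))⁻¹ * ∑ i, F u (HGE.flipv i u)) := by
      intro u
      have hterm : ∀ v, F u v * Q u v * π u
          = ((2:ℝ)^n)⁻¹ * ((if (Finset.univ.filter fun i => u i ≠ v i).card = 1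
              then ((n : ℝ))⁻¹ else 0) * F u v) := by
        intro v
        rw [hQ u v, hπ u]
        ring
      rw [Finset.sum_congr rfl fun v _ => hterm v, ← Finset.mul_sum,
        HGE.sum_neighbors u ((n:ℝ))⁻¹ (fun v => F u v)]
    rw [Finset.sum_congr rfl fun u _ => hu u, ← Finset.mul_sum]
    congr 1
    rw [← Finset.mul_sum]
    congr 1
    exact Finset.sum_comm
  have hL : ∑ u, ∑ v, ((kerM n t).mulVec f v - (kerM n t).mulVec f u) ^ 2
        * logMean (ρ u) (ρ v) * Q u v * π u
      = ((2:ℝ)^n)⁻¹ * (((n:ℝ))⁻¹ * ∑ i, ∑ u,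
          ((kerM n t).mulVec f (HGE.flipv i u) - (kerM n t).mulVec f u) ^ 2
            * logMean (ρ u) (ρ (HGE.flipv i u))) :=
    reduce (fun u v => ((kerM n t).mulVec f v - (kerM n t).mulVec f u) ^ 2
      * logMean (ρ u) (ρ v))
  have hR : ∑ u, ∑ v, (f v - f u) ^ 2
        * logMean ((kerM n t).mulVec ρ u) ((kerM n t).mulVec ρ v) * Q u v * π u
      = ((2:ℝ)^n)⁻¹ * (((n:ℝ))⁻¹ * ∑ i, ∑ u, (f (HGE.flipv i u) - f u) ^ 2
          * logMean ((kerM n t).mulVec ρ u) ((kerM n t).mulVec ρ (HGE.flipv i u))) :=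
    reduce (fun u v => (f v - f u) ^ 2
      * logMean ((kerM n t).mulVec ρ u) ((kerM n t).mulVec ρ v))
  rw [hL, hR]
  set SL := ∑ i, ∑ u, ((kerM n t).mulVec f (HGE.flipv i u) - (kerM n t).mulVec f u) ^ 2
    * logMean (ρ u) (ρ (HGE.flipv i u)) with hSL
  set SR := ∑ i, ∑ u, (f (HGE.flipv i u) - f u) ^ 2
    * logMean ((kerM n t).mulVec ρ u) ((kerM n t).mulVec ρ (HGE.flipv i u)) with hSR
  have hmain : SL ≤ Real.exp (-4*t/n) * SR := by
    rw [hSL, hSR, Finset.mul_sum]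
    exact Finset.sum_le_sum fun i _ => HGE.per_coord hn ht i ρ hρ f
  have hc0 : (0:ℝ) ≤ (1/2) * (((2:ℝ)^n)⁻¹ * ((n:ℝ))⁻¹) := by positivity
  calc (1/2) * (((2:ℝ)^n)⁻¹ * (((n:ℝ))⁻¹ * SL))
      = ((1/2) * (((2:ℝ)^n)⁻¹ * ((n:ℝ))⁻¹)) * SL := by ring
    _ ≤ ((1/2) * (((2:ℝ)^n)⁻¹ * ((n:ℝ))⁻¹)) * (Real.exp (-4*t/n) * SR) :=
        mul_le_mul_of_nonneg_left hmain hc0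
    _ = Real.exp (-4 * t / n) * ((1/2) * (((2:ℝ)^n)⁻¹ * (((n:ℝ))⁻¹ * SR))) := by
        ring
end
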